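/- (Bizley's first identity) For all natural numbers a, b, d, p, we have ∑_{k=0}^{a} C(a,k)·C(b, k−d)·C(p+k, a+b) = C(p, a−d)·C(p+d, b+d). -/

import Mathlib

/-- Binomial coefficient for integers: `C x y` is the usual binomial coefficient
when `0 ≤ y ≤ x`, and `0` otherwise. -/
def C (x y : ℤ) : ℤ := if 0 ≤ y ∧ y ≤ x then (x.toNat.choose y.toNat : ℤ) else 0

lemma C_of_neg {x y : ℤ} (h : y < 0) : C x y = 0 := by
  unfold C; rw [if_neg]; omega

lemma C_of_gt {x y : ℤ} (h : x < y) : C x y = 0 := by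
  unfold C; rw [if_neg]; omega

lemma C_natCast (x y : ℕ) : C x y = (x.choose y : ℤ) := by
  unfold C
  split_ifs with h
  · simp
  · rw [Nat.choose_eq_zero_of_lt (by omega)]; simp

lemma C_symm {x : ℤ} (hx : 0 ≤ x) (y : ℤ) : C x y = C x (x - y) := by
  unfold C
  split_ifs with h1 h2 h2
  · have hy : (x - y).toNat = x.toNat - y.toNat := by omega
    rw [hy, Nat.choose_symm (by omega)]
  · omega
  · omega
  · rfl

lemma C_trinomial (n m r : ℤ) : C n m * C m r = C n r * C (n - r) (m - r) := by
  unfold C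
  split_ifs with h1 h2 h3 h4 <;> try omega
  · have e1 : (n - r).toNat = n.toNat - r.toNat := by omega
    have e2 : (m - r).toNat = m.toNat - r.toNat := by omega
    rw [e1, e2, ← Nat.cast_mul, ← Nat.cast_mul,
      Nat.choose_mul (n := n.toNat) (k := m.toNat) (s := r.toNat) (by omega)]
  all_goals simp_all

lemma C_vandermonde (x y N : ℕ) (hN : x ≤ N) (n : ℤ) :
    ∑ i ∈ Finset.range (N + 1), C x i * C y (n - i) = C (x + y) n := by
  rcases lt_or_ge n 0 with hn | hn
  · rw [C_of_neg hn]
    apply Finset.sum_eq_zero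
    intro i _
    rw [C_of_neg (by omega : n - (i : ℤ) < 0), mul_zero]
  obtain ⟨nn, rfl⟩ := Int.eq_ofNat_of_zero_le hn
  have key : ((x + y).choose nn : ℤ) = ∑ i ∈ Finset.range (nn + 1),
      (x.choose i * y.choose (nn - i) : ℤ) := by
    rw [Nat.add_choose_eq, Finset.Nat.sum_antidiagonal_eq_sum_range_succ_mk]
    push_cast
    rfl
  rw [show ((x:ℤ) + y) = ((x + y : ℕ) : ℤ) by push_cast; ring, C_natCast (x + y) nn, key]
  rw [show ∑ i ∈ Finset.range (nn + 1), (x.choose i * y.choose (nn - i) : ℤ)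
      = ∑ i ∈ Finset.range (nn + 1), C x i * C y ((nn : ℤ) - i) from
    Finset.sum_congr rfl fun i hi => by
      rw [Finset.mem_range] at hi
      rw [C_natCast x i, show (nn : ℤ) - i = ((nn - i : ℕ) : ℤ) by omega, C_natCast]]
  rcases le_total nn N with h | h
  · symm
    apply Finset.sum_subset (Finset.range_subset_range.2 (by omega))
    intro i _ hi
    rw [Finset.mem_range] at hi
    rw [C_of_neg (by push_cast; omega : (nn : ℤ) - i < 0), mul_zero]
  · apply Finset.sum_subset (Finset.range_subset_range.2 (by omega))
    intro i _ hi
    rw [Finset.mem_range] at hi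
    rw [C_natCast x i, Nat.choose_eq_zero_of_lt (by omega)]
    simp

theorem stmt_18 (a b d p : ℕ) :
    ∑ k ∈ Finset.range (a + 1), C a k * C b ((k : ℤ) - d) * C ((p : ℤ) + k) ((a : ℤ) + b) = C p ((a : ℤ) - d) * C ((p : ℤ) + d) ((b : ℤ) + d) := by
  have main : ∑ k ∈ Finset.range (a + 1), C a k * C b ((k : ℤ) - d) * C ((p : ℤ) + k) ((a : ℤ) + b)
      = C p ((a:ℤ) - d) * ∑ j ∈ Finset.range (a + 1), C a j * C ((p:ℤ) + d - a) (((b:ℤ) + d) - j) := by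
    calc
      ∑ k ∈ Finset.range (a + 1), C a k * C b ((k : ℤ) - d) * C ((p : ℤ) + k) ((a : ℤ) + b)
          = ∑ k ∈ Finset.range (a + 1), ∑ j ∈ Finset.range (a + 1),
            (C a k * C k j * C b ((k:ℤ) - d)) * C p (((a:ℤ) + b) - j) := by
        apply Finset.sum_congr rfl
        intro k hk
        rw [Finset.mem_range] at hk
        rw [show ((p:ℤ) + k) = (k:ℤ) + p by ring,
          ← C_vandermonde k p a (by omega) ((a:ℤ) + b), Finset.mul_sum]
        apply Finset.sum_congr rfl
        intro j _
        ring
      _ = ∑ j ∈ Finset.range (a + 1), ∑ k ∈ Finset.range (a + 1),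
            (C a k * C k j * C b ((k:ℤ) - d)) * C p (((a:ℤ) + b) - j) := Finset.sum_comm
      _ = ∑ j ∈ Finset.range (a + 1), (C a j * C p (((a:ℤ) + b) - j)) *
            ∑ k ∈ Finset.range (a + 1), C ((a:ℤ) - j) ((k:ℤ) - j) * C b ((k:ℤ) - d) := by
        apply Finset.sum_congr rfl
        intro j _
        rw [Finset.mul_sum]
        apply Finset.sum_congr rfl
        intro k _
        rw [C_trinomial a k j]
        ring
      _ = ∑ j ∈ Finset.range (a + 1), (C a j * C p (((a:ℤ) + b) - j)) *
            C (((a:ℤ) + b) - j) ((a:ℤ) - d) := by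
        apply Finset.sum_congr rfl
        intro j hj
        rw [Finset.mem_range] at hj
        congr 1
        rw [show (((a:ℤ) + b) - j) = ((a - j : ℕ) : ℤ) + (b:ℤ) by push_cast; omega,
          ← C_vandermonde (a - j) b a (by omega) ((a:ℤ) - d),
          ← Finset.sum_range_reflect]
        apply Finset.sum_congr rfl
        intro k hk
        rw [Finset.mem_range] at hk
        have e1 : ((a + 1 - 1 - k : ℕ) : ℤ) = (a:ℤ) - k := by push_cast; omega
        rw [e1, C_symm (show (0:ℤ) ≤ (a:ℤ) - j by omega) (((a:ℤ) - k) - j),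
          show ((a:ℤ) - j) - (((a:ℤ) - k) - j) = (k:ℤ) by ring,
          show ((a - j : ℕ) : ℤ) = (a:ℤ) - j by push_cast; omega,
          show ((a:ℤ) - k - d) = (a:ℤ) - d - k by ring]
      _ = ∑ j ∈ Finset.range (a + 1), C a j *
            (C p ((a:ℤ) - d) * C ((p:ℤ) - ((a:ℤ) - d)) ((((a:ℤ) + b) - j) - ((a:ℤ) - d))) := by
        apply Finset.sum_congr rfl
        intro j _
        rw [mul_assoc, C_trinomial p (((a:ℤ) + b) - j) ((a:ℤ) - d)]
      _ = C p ((a:ℤ) - d) * ∑ j ∈ Finset.range (a + 1), C a j * C ((p:ℤ) + d - a) (((b:ℤ) + d) - j) := by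
        rw [Finset.mul_sum]
        apply Finset.sum_congr rfl
        intro j _
        rw [show ((p:ℤ) - ((a:ℤ) - d)) = (p:ℤ) + d - a by ring,
          show ((((a:ℤ) + b) - j) - ((a:ℤ) - d)) = ((b:ℤ) + d) - j by ring]
        ring
  rw [main]
  rcases le_or_gt a (p + d) with hpd | hpd
  · congr 1
    rw [show ((p:ℤ) + d - a) = ((p + d - a : ℕ) : ℤ) by push_cast; omega,
      show ((p:ℤ) + d) = (a:ℤ) + ((p + d - a : ℕ) : ℤ) by push_cast; omega,
      ← C_vandermonde a (p + d - a) a le_rfl ((b:ℤ) + d)]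
  · rw [C_of_gt (by push_cast; omega : (p:ℤ) < (a:ℤ) - d), zero_mul, zero_mul]
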